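/- For integers m ≥ 1 and n with 3^m ≤ n < 3^(m+1), the tail Σ_{k=m+1}^∞ 2^(n-3^k)/3^k is bounded above by 2^(n - 3^(m+1) + 1)/3^(m+1). -/

import Mathlib

/-- Tail estimate: for `m ≥ 1` and `3^m ≤ n < 3^(m+1)`, the tail
`Σ_{k=m+1}^∞ 2^(n-3^k)/3^k` is at most `2^(n - 3^(m+1) + 1)/3^(m+1)`. -/
theorem tail_estimate (m n : ℕ) (hm : 1 ≤ m) (hn : 3 ^ m ≤ n) (hn' : n < 3 ^ (m + 1)) :
    (∑' k : ℕ, (2 : ℝ) ^ ((n : ℤ) - 3 ^ (m + 1 + k)) / 3 ^ (m + 1 + k)) ≤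
      (2 : ℝ) ^ ((n : ℤ) - 3 ^ (m + 1) + 1) / 3 ^ (m + 1) := by
  set c : ℝ := (2 : ℝ) ^ ((n : ℤ) - 3 ^ (m + 1)) / 3 ^ (m + 1) with hc
  have hcpos : 0 < c := by positivity
  have hle : ∀ k : ℕ, (2 : ℝ) ^ ((n : ℤ) - 3 ^ (m + 1 + k)) / 3 ^ (m + 1 + k)
      ≤ c * (1 / 2 : ℝ) ^ k := by
    intro k
    have hexp : (3 : ℤ) ^ (m + 1) + k ≤ 3 ^ (m + 1 + k) := by
      have h1 : 3 ^ (m + 1) + k ≤ 3 ^ (m + 1 + k) := by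
        have hk : k < 3 ^ k := Nat.lt_pow_self (by norm_num)
        have h2 : 1 ≤ 3 ^ (m + 1) := Nat.one_le_pow _ _ (by norm_num)
        rw [pow_add 3 (m + 1) k]
        nlinarith
      exact_mod_cast h1
    have h2 : (2 : ℝ) ^ ((n : ℤ) - 3 ^ (m + 1 + k)) ≤
        (2 : ℝ) ^ ((n : ℤ) - 3 ^ (m + 1) - k) :=
      zpow_le_zpow_right₀ (by norm_num) (by omega)
    have h3 : (3 : ℝ) ^ (m + 1) ≤ (3 : ℝ) ^ (m + 1 + k) :=
      pow_le_pow_right₀ (by norm_num) (by omega)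
    have h4 : (2 : ℝ) ^ ((n : ℤ) - 3 ^ (m + 1 + k)) / 3 ^ (m + 1 + k)
        ≤ (2 : ℝ) ^ ((n : ℤ) - 3 ^ (m + 1) - k) / 3 ^ (m + 1) :=
      div_le_div₀ (by positivity) h2 (by positivity) h3
    refine h4.trans_eq ?_
    rw [hc, div_mul_eq_mul_div]
    congr 1
    rw [one_div, inv_pow, ← zpow_natCast (2 : ℝ) k, ← zpow_neg,
      ← zpow_add₀ (by norm_num : (2:ℝ) ≠ 0)]
    ring_nf
  have hsum2 : Summable (fun k : ℕ => c * (1 / 2 : ℝ) ^ k) :=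
    (summable_geometric_of_lt_one (by norm_num) (by norm_num)).mul_left c
  have hsum1 : Summable (fun k : ℕ =>
      (2 : ℝ) ^ ((n : ℤ) - 3 ^ (m + 1 + k)) / 3 ^ (m + 1 + k)) :=
    Summable.of_nonneg_of_le (fun k => by positivity) hle hsum2
  calc (∑' k : ℕ, (2 : ℝ) ^ ((n : ℤ) - 3 ^ (m + 1 + k)) / 3 ^ (m + 1 + k))
      ≤ ∑' k : ℕ, c * (1 / 2 : ℝ) ^ k := Summable.tsum_le_tsum hle hsum1 hsum2
    _ = c * 2 := by
        rw [tsum_mul_left, tsum_geometric_of_lt_one (by norm_num) (by norm_num)]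
        norm_num
    _ = (2 : ℝ) ^ ((n : ℤ) - 3 ^ (m + 1) + 1) / 3 ^ (m + 1) := by
        rw [hc, zpow_add₀ (by norm_num : (2:ℝ) ≠ 0)]
        ring
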